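/- (i) The n×r matrix Q with (i,j)-entry ∂d_{n-1-i}/∂b_{r-1-j} equals the first r columns of the n×n matrix −B^{-1}·D̂ (B is invertible over R since L_n is nilpotent); in particular ∂d_i/∂b_j depends only on the difference i − j, for 0 ≤ i ≤ n−1 and 0 ≤ j ≤ r−1. (ii) If q_1 ≥ 2, then for all 0 ≤ i ≤ r−1 and 0 ≤ j ≤ r−1, the polynomial ∂d_i/∂b_j lies in the ideal of R generated by ∂d_{r-1}/∂b_0, …, ∂d_{r-1}/∂b_{r-1} and d_1,…,d_{r-1}. -/

import Mathlib

open MvPolynomial Matrix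

noncomputable section

namespace TB

/-- The polynomial ring `ℂ[a_0,…,a_{n-1},b_0,…,b_{r-1}]`: variable `Sum.inl i` is `a_i`
and `Sum.inr j` is `b_j`. -/
abbrev R (n r : ℕ) : Type := MvPolynomial (Fin n ⊕ Fin r) ℂ

/-- The power series `1 + (cf 1)·t + ⋯ + (cf m)·t^m`. -/
def ser {A : Type*} [CommRing A] (m : ℕ) (cf : ℕ → A) : PowerSeries A :=
  PowerSeries.mk fun k => if k = 0 then 1 else if k ≤ m then cf k else 0

/-- `1 + a_{n-1} t + ⋯ + a_0 t^n`. -/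
def Aser (n r : ℕ) : PowerSeries (R n r) :=
  ser n fun k => if h : 1 ≤ k ∧ k ≤ n then X (Sum.inl ⟨n - k, by omega⟩) else 0

/-- `1 + b_{r-1} t + ⋯ + b_0 t^r`. -/
def Bser (n r : ℕ) : PowerSeries (R n r) :=
  ser r fun k => if h : 1 ≤ k ∧ k ≤ r then X (Sum.inr ⟨r - k, by omega⟩) else 0

/-- `1 + d_{n-1} t + ⋯ + d_0 t^n`. -/
def Dser (n r : ℕ) (d : Fin n → R n r) : PowerSeries (R n r) :=
  ser n fun k => if h : 1 ≤ k ∧ k ≤ n then d ⟨n - k, by omega⟩ else 0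

/-- `1 + d_{n-1} t + ⋯ + d_1 t^{n-1}`. -/
def Dhatser (n r : ℕ) (d : Fin n → R n r) : PowerSeries (R n r) :=
  ser (n - 1) fun k => if h : 1 ≤ k ∧ k ≤ n - 1 then d ⟨n - k, by omega⟩ else 0

/-- `f(x) = x^n + a_{n-1}x^{n-1} + ⋯ + a_0`. -/
def fpoly (n r : ℕ) : Polynomial (R n r) :=
  Polynomial.X ^ n + ∑ i : Fin n, Polynomial.C (X (Sum.inl i)) * Polynomial.X ^ (i : ℕ)

/-- `g(x) = x^r + b_{r-1}x^{r-1} + ⋯ + b_0`. -/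
def gpoly (n r : ℕ) : Polynomial (R n r) :=
  Polynomial.X ^ r + ∑ j : Fin r, Polynomial.C (X (Sum.inr j)) * Polynomial.X ^ (j : ℕ)

/-- The coefficient `c_k` of `f·g`, for `0 ≤ k ≤ n+r-1`. -/
def cc (n r : ℕ) (k : Fin (n + r)) : R n r := (fpoly n r * gpoly n r).coeff (k : ℕ)

/-- `d_0, …, d_{n-1}` are the unique polynomials with
`(1 + b_{r-1}t + ⋯ + b_0 t^r)(1 + d_{n-1}t + ⋯ + d_0 t^n) ≡ 1 + a_{n-1}t + ⋯ + a_0 t^n (mod t^{n+1})`. -/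
def dSpec (n r : ℕ) (d : Fin n → R n r) : Prop :=
  ∀ k ≤ n, PowerSeries.coeff k (Bser n r * Dser n r d)
    = PowerSeries.coeff k (Aser n r)

/-- `ψ_i = d_i` for `0 ≤ i ≤ r-1`, and
`ψ_{s·r+i} = ∂^s d_{r-1} / (∂b_0^{s-1} ∂b_{r-1-i})` for `s ≥ 1`, `0 ≤ i ≤ r-1`. -/
def psi (n r : ℕ) (hr : 0 < r) (hrn : r ≤ n) (d : Fin n → R n r) (m : ℕ) : R n r :=
  if h : m < r then d ⟨m, by omega⟩
  else
    (fun q => pderiv (Sum.inr (⟨0, hr⟩ : Fin r)) q)^[m / r - 1]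
      (pderiv (Sum.inr (⟨r - 1 - m % r, by omega⟩ : Fin r)) (d ⟨r - 1, by omega⟩))

/-- The `m×m` lower shift matrix over `R n r`. -/
def Lmat (n r m : ℕ) : Matrix (Fin m) (Fin m) (R n r) :=
  Matrix.of fun i j => if (i : ℕ) = (j : ℕ) + 1 then 1 else 0

/-- `B = I_n + b_{r-1}L_n + ⋯ + b_0 L_n^r`. -/
def Bmat (n r : ℕ) (hr : 0 < r) : Matrix (Fin n) (Fin n) (R n r) :=
  1 + ∑ k ∈ Finset.range r, (X (Sum.inr (⟨r - 1 - k, by omega⟩ : Fin r)) : R n r) • Lmat n r n ^ (k + 1)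

/-- `D̂ = I_n + d_{n-1}L_n + ⋯ + d_1 L_n^{n-1}`. -/
def Dhat (n r : ℕ) (hn : 0 < n) (d : Fin n → R n r) : Matrix (Fin n) (Fin n) (R n r) :=
  1 + ∑ k ∈ Finset.range (n - 1), d ⟨n - 1 - k, by omega⟩ • Lmat n r n ^ (k + 1)

/-- `D`: the first `r` columns of `D̂`. -/
def Dmat (n r : ℕ) (hn : 0 < n) (hrn : r ≤ n) (d : Fin n → R n r) :
    Matrix (Fin n) (Fin r) (R n r) :=
  (Dhat n r hn d).submatrix id (Fin.castLE hrn)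

/-- `Â = I_n + a_{n-1}L_n + ⋯ + a_1 L_n^{n-1}`. -/
def Ahat (n r : ℕ) (hn : 0 < n) : Matrix (Fin n) (Fin n) (R n r) :=
  1 + ∑ k ∈ Finset.range (n - 1),
    (X (Sum.inl (⟨n - 1 - k, by omega⟩ : Fin n)) : R n r) • Lmat n r n ^ (k + 1)

/-- `A`: the first `r` columns of `Â`. -/
def Amat (n r : ℕ) (hn : 0 < n) (hrn : r ≤ n) : Matrix (Fin n) (Fin r) (R n r) :=
  (Ahat n r hn).submatrix id (Fin.castLE hrn)

/-- The Jacobian matrix of a family `p` of elements of `R n r`: the row of index `i` is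
`(∂p_i/∂a_{n-1}, …, ∂p_i/∂a_0, ∂p_i/∂b_{r-1}, …, ∂p_i/∂b_0)`. -/
def jac {n r : ℕ} {ι : Type*} (p : ι → R n r) : Matrix ι (Fin (n + r)) (R n r) :=
  Matrix.of fun i j =>
    if h : (j : ℕ) < n then pderiv (Sum.inl (⟨n - 1 - (j : ℕ), by omega⟩ : Fin n)) (p i)
    else
      pderiv (Sum.inr (⟨r - 1 - ((j : ℕ) - n), by have := j.isLt; omega⟩ : Fin r)) (p i)

/-- The set of all `k×k` minors of a matrix. -/
def minorsSet {n r : ℕ} {ι : Type*} (k : ℕ) (M : Matrix ι (Fin (n + r)) (R n r)) :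
    Set (R n r) :=
  { x | ∃ (ri : Fin k → ι) (ci : Fin k → Fin (n + r)), x = (M.submatrix ri ci).det }

/-- Evaluation at the origin `a_i = b_j = 0`. -/
def ev0 (n r : ℕ) : R n r →+* ℂ := eval fun _ => 0

/-- The maximal ideal `(a_0,…,a_{n-1},b_0,…,b_{r-1})`. -/
def mIdeal (n r : ℕ) : Ideal (R n r) :=
  Ideal.span (Set.range (X : (Fin n ⊕ Fin r) → R n r))

/-- `1 + g_1 t + ⋯ + g_{r_1} t^{r_1}` over `S = ℂ[g_1,…,g_{r_1},b_0,…,b_{r-1}] = R r1 r`,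
where `g_k` is the variable `Sum.inl ⟨k-1⟩`. -/
def Gser (r1 r : ℕ) : PowerSeries (R r1 r) :=
  ser r1 fun k => if h : 1 ≤ k ∧ k ≤ r1 then X (Sum.inl ⟨k - 1, by omega⟩) else 0

/-- `1 + w_{r-1} t + ⋯ + w_0 t^r`. -/
def Wser (r1 r : ℕ) (w : Fin r → R r1 r) : PowerSeries (R r1 r) :=
  ser r fun k => if h : 1 ≤ k ∧ k ≤ r then w ⟨r - k, by omega⟩ else 0

/-- `1 + w_{r-1} t + ⋯ + w_1 t^{r-1}`. -/
def Whatser (r1 r : ℕ) (w : Fin r → R r1 r) : PowerSeries (R r1 r) :=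
  ser (r - 1) fun k => if h : 1 ≤ k ∧ k ≤ r - 1 then w ⟨r - k, by omega⟩ else 0

/-- `w_0,…,w_{r-1}` are the unique polynomials with
`(1 + g_1 t + ⋯ + g_{r_1}t^{r_1})(1 + w_{r-1}t + ⋯ + w_0 t^r) ≡ 1 + b_{r-1}t + ⋯ + b_0 t^r
(mod t^{r+1})`. -/
def wSpec (r1 r : ℕ) (w : Fin r → R r1 r) : Prop :=
  ∀ k ≤ r, PowerSeries.coeff k (Gser r1 r * Wser r1 r w)
    = PowerSeries.coeff k (Bser r1 r)

/-- `φ'_i = w_i` for `0 ≤ i ≤ r_1-1`, and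
`φ'_{s·r_1+i} = ∂^s w_{r_1-1} / (∂g_{r_1}^{s-1} ∂g_{1+i})` for `s ≥ 1`, `0 ≤ i ≤ r_1-1`. -/
def phi' (r1 r : ℕ) (h1 : 0 < r1) (h2 : r1 < r) (w : Fin r → R r1 r) (m : ℕ) : R r1 r :=
  if h : m < r1 then w ⟨m, by omega⟩
  else
    (fun q => pderiv (Sum.inl (⟨r1 - 1, by omega⟩ : Fin r1)) q)^[m / r1 - 1]
      (pderiv (Sum.inl (⟨m % r1, Nat.mod_lt m h1⟩ : Fin r1)) (w ⟨r1 - 1, by omega⟩))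

/-- The substitution `g_k ↦ γ_{n-k}`, `b_j ↦ b_j`, from `S = R r1 r` to `R n r`. -/
def subst (n r r1 : ℕ) (γ : ℕ → R n r) : R r1 r →ₐ[ℂ] R n r :=
  aeval (Sum.elim (fun i : Fin r1 => γ (n - ((i : ℕ) + 1))) fun j : Fin r => X (Sum.inr j))


/-- From `n = q_1·r + r_1` with `q_1 ≥ 1` we get `r ≤ n`. -/
theorem rle (q1 r r1 n : ℕ) (hq1 : 1 ≤ q1) (hn : n = q1 * r + r1) : r ≤ n := by
  have := Nat.le_mul_of_pos_left r hq1
  omega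


/-! ### Auxiliary machinery -/

section Aux

lemma coeff_ser {A : Type*} [CommRing A] (m : ℕ) (cf : ℕ → A) (k : ℕ) :
    PowerSeries.coeff k (ser m cf) = if k = 0 then 1 else if k ≤ m then cf k else 0 := by
  simp [ser, PowerSeries.coeff_mk]

/-- Lower-triangular Toeplitz matrix attached to a power series. -/
def toep (n r : ℕ) (f : PowerSeries (R n r)) : Matrix (Fin n) (Fin n) (R n r) :=
  Matrix.of fun i j =>
    if (j : ℕ) ≤ (i : ℕ) then PowerSeries.coeff ((i : ℕ) - (j : ℕ)) f else 0

lemma toep_one (n r : ℕ) : toep n r 1 = 1 := by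
  refine Matrix.ext fun i j => ?_
  simp only [toep, Matrix.of_apply, PowerSeries.coeff_one, Matrix.one_apply, Fin.ext_iff]
  split_ifs <;> first | rfl | (exfalso; omega)

lemma toep_mul (n r : ℕ) (f g : PowerSeries (R n r)) :
    toep n r f * toep n r g = toep n r (f * g) := by
  refine Matrix.ext fun i j => ?_
  simp only [toep, Matrix.mul_apply, Matrix.of_apply]
  by_cases hij : (j : ℕ) ≤ (i : ℕ)
  · rw [if_pos hij, PowerSeries.coeff_mul,
      Finset.Nat.sum_antidiagonal_eq_sum_range_succ_mk,
      Fin.sum_univ_eq_sum_range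
        (fun k => (if k ≤ (i : ℕ) then PowerSeries.coeff ((i : ℕ) - k) f else 0) *
          (if (j : ℕ) ≤ k then PowerSeries.coeff (k - (j : ℕ)) g else 0)),
      ← Finset.sum_subset
        (show Finset.Icc (j : ℕ) (i : ℕ) ⊆ Finset.range n by
          intro x hx
          simp only [Finset.mem_Icc] at hx
          simp only [Finset.mem_range]
          omega)
        (by
          intro x _ hx'
          simp only [Finset.mem_Icc, not_and_or, not_le] at hx'
          rcases hx' with h | h
          · rw [if_neg (show ¬ (j : ℕ) ≤ x by omega), mul_zero]
          · rw [if_neg (show ¬ x ≤ (i : ℕ) by omega), zero_mul])]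
    refine Finset.sum_nbij' (fun k => (i : ℕ) - k) (fun p => (i : ℕ) - p) ?_ ?_ ?_ ?_ ?_
    · intro a ha; simp only [Finset.mem_Icc] at ha; simp only [Finset.mem_range]; omega
    · intro a ha; simp only [Finset.mem_range, Nat.succ_eq_add_one] at ha
      simp only [Finset.mem_Icc]; omega
    · intro a ha; simp only [Finset.mem_Icc] at ha
      show (i : ℕ) - ((i : ℕ) - a) = a
      omega
    · intro a ha; simp only [Finset.mem_range, Nat.succ_eq_add_one] at ha
      show (i : ℕ) - ((i : ℕ) - a) = a
      omega
    · intro a ha; simp only [Finset.mem_Icc] at ha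
      rw [if_pos (show a ≤ (i : ℕ) by omega), if_pos (show (j : ℕ) ≤ a by omega)]
      rw [show (i : ℕ) - (j : ℕ) - ((i : ℕ) - a) = a - (j : ℕ) by omega]
  · rw [if_neg hij]
    apply Finset.sum_eq_zero
    intro k _
    rcases le_or_gt (j : ℕ) (k : ℕ) with h | h
    · rw [if_neg (show ¬ (k : ℕ) ≤ (i : ℕ) by omega), zero_mul]
    · rw [if_neg (show ¬ (j : ℕ) ≤ (k : ℕ) by omega), mul_zero]

lemma Lmat_eq_toep (n r : ℕ) : Lmat n r n = toep n r PowerSeries.X := by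
  refine Matrix.ext fun i j => ?_
  simp only [Lmat, toep, Matrix.of_apply, PowerSeries.coeff_X]
  split_ifs <;> first | rfl | (exfalso; omega)

lemma Lpow_eq_toep (n r : ℕ) (p : ℕ) : Lmat n r n ^ p = toep n r (PowerSeries.X ^ p) := by
  induction p with
  | zero => rw [pow_zero, pow_zero, toep_one]
  | succ p ih => rw [pow_succ, pow_succ, ih, Lmat_eq_toep, toep_mul]

lemma Bmat_eq_toep (n r : ℕ) (hr : 0 < r) (hn : 0 < n) :
    Bmat n r hr = toep n r (Bser n r) := by
  refine Matrix.ext fun i j => ?_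
  simp only [Bmat, Matrix.add_apply, Matrix.sum_apply, Matrix.smul_apply, Lpow_eq_toep,
    toep, Matrix.of_apply, Matrix.one_apply, smul_eq_mul, PowerSeries.coeff_X_pow,
    Bser, coeff_ser]
  by_cases hij : (j : ℕ) ≤ (i : ℕ)
  · rw [if_pos hij]
    by_cases h0 : (i : ℕ) - (j : ℕ) = 0
    · rw [Finset.sum_eq_zero (fun k _ => by
        rw [if_pos hij, if_neg (by omega), mul_zero]),
        if_pos (Fin.ext_iff.mpr (by omega)), h0, if_pos rfl, add_zero]
    · rw [if_neg (fun h => h0 (by rw [Fin.ext_iff] at h; omega)), if_neg h0, zero_add]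
      by_cases h1 : (i : ℕ) - (j : ℕ) ≤ r
      · rw [Finset.sum_eq_single ((i : ℕ) - (j : ℕ) - 1), if_pos hij, if_pos (by omega),
          mul_one, if_pos h1, dif_pos ⟨by omega, h1⟩]
        · rw [show (⟨r - 1 - ((i : ℕ) - (j : ℕ) - 1), by omega⟩ : Fin r)
              = (⟨r - ((i : ℕ) - (j : ℕ)), by omega⟩ : Fin r) from
            Fin.ext (show r - 1 - ((i : ℕ) - (j : ℕ) - 1) = r - ((i : ℕ) - (j : ℕ)) by omega)]
        · intro k _ hk
          rw [if_pos hij, if_neg (by omega), mul_zero]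
        · intro h
          exact absurd (Finset.mem_range.mpr (by omega)) h
      · rw [Finset.sum_eq_zero (fun k hk => by
          simp only [Finset.mem_range] at hk
          rw [if_pos hij, if_neg (by omega), mul_zero]), if_neg h1]
  · rw [if_neg hij, if_neg (fun h => hij (by rw [Fin.ext_iff] at h; omega)), zero_add]
    exact Finset.sum_eq_zero fun k _ => by rw [if_neg hij, mul_zero]

lemma Dhat_eq_toep (n r : ℕ) (hn : 0 < n) (d : Fin n → R n r) :
    Dhat n r hn d = toep n r (Dhatser n r d) := by
  refine Matrix.ext fun i j => ?_
  simp only [Dhat, Matrix.add_apply, Matrix.sum_apply, Matrix.smul_apply, Lpow_eq_toep,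
    toep, Matrix.of_apply, Matrix.one_apply, smul_eq_mul, PowerSeries.coeff_X_pow,
    Dhatser, coeff_ser]
  by_cases hij : (j : ℕ) ≤ (i : ℕ)
  · rw [if_pos hij]
    by_cases h0 : (i : ℕ) - (j : ℕ) = 0
    · rw [Finset.sum_eq_zero (fun k _ => by
        rw [if_pos hij, if_neg (by omega), mul_zero]),
        if_pos (Fin.ext_iff.mpr (by omega)), h0, if_pos rfl, add_zero]
    · rw [if_neg (fun h => h0 (by rw [Fin.ext_iff] at h; omega)), if_neg h0, zero_add]
      by_cases h1 : (i : ℕ) - (j : ℕ) ≤ n - 1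
      · rw [Finset.sum_eq_single ((i : ℕ) - (j : ℕ) - 1), if_pos hij, if_pos (by omega),
          mul_one, if_pos h1, dif_pos ⟨by omega, h1⟩]
        · rw [show (⟨n - 1 - ((i : ℕ) - (j : ℕ) - 1), by omega⟩ : Fin n)
              = (⟨n - ((i : ℕ) - (j : ℕ)), by omega⟩ : Fin n) from
            Fin.ext (show n - 1 - ((i : ℕ) - (j : ℕ) - 1) = n - ((i : ℕ) - (j : ℕ)) by omega)]
        · intro k _ hk
          rw [if_pos hij, if_neg (by omega), mul_zero]
        · intro h
          exact absurd (Finset.mem_range.mpr (by omega)) h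
      · rw [Finset.sum_eq_zero (fun k hk => by
          simp only [Finset.mem_range] at hk
          rw [if_pos hij, if_neg (by omega), mul_zero]), if_neg h1]
  · rw [if_neg hij, if_neg (fun h => hij (by rw [Fin.ext_iff] at h; omega)), zero_add]
    exact Finset.sum_eq_zero fun k _ => by rw [if_neg hij, mul_zero]

/-- Coefficientwise partial derivative of a power series over `R n r`. -/
def Pd (n r : ℕ) (v : Fin n ⊕ Fin r) (f : PowerSeries (R n r)) : PowerSeries (R n r) :=
  PowerSeries.mk fun k => pderiv v (PowerSeries.coeff k f)

lemma coeff_Pd (n r : ℕ) (v : Fin n ⊕ Fin r) (f : PowerSeries (R n r)) (k : ℕ) :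
    PowerSeries.coeff k (Pd n r v f) = pderiv v (PowerSeries.coeff k f) :=
  PowerSeries.coeff_mk _ _

lemma Pd_mul (n r : ℕ) (v : Fin n ⊕ Fin r) (f g : PowerSeries (R n r)) :
    Pd n r v (f * g) = Pd n r v f * g + f * Pd n r v g := by
  ext k
  simp only [Pd, PowerSeries.coeff_mk, map_add, PowerSeries.coeff_mul, map_sum,
    pderiv_mul, Finset.sum_add_distrib]

/-- The inverse power series of `Bser`. -/
def Einv (n r : ℕ) : PowerSeries (R n r) := PowerSeries.invOfUnit (Bser n r) 1

lemma BE_one (n r : ℕ) : Bser n r * Einv n r = 1 :=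
  PowerSeries.mul_invOfUnit _ _ (by simp [Bser, ser, PowerSeries.constantCoeff_mk])

/-- Elimination: if `B·G` vanishes up to order `n`, so does `G`. -/
lemma elim_lemma (n r m : ℕ) (G : PowerSeries (R n r))
    (hG : ∀ k ≤ m, PowerSeries.coeff k (Bser n r * G) = 0) :
    ∀ k ≤ m, PowerSeries.coeff k G = 0 := by
  intro k hk
  have hGe : G = Einv n r * (Bser n r * G) := by
    rw [← mul_assoc, mul_comm (Einv n r), BE_one, one_mul]
  rw [hGe, PowerSeries.coeff_mul]
  apply Finset.sum_eq_zero
  intro p hp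
  rw [Finset.HasAntidiagonal.mem_antidiagonal] at hp
  rw [hG p.2 (by omega), mul_zero]

/-- The key closed formula for `∂d_i/∂b_j`. -/
lemma key (n r : ℕ) (d : Fin n → R n r) (hd : dSpec n r d) (i : Fin n) (j : Fin r) :
    pderiv (Sum.inr j) (d i) =
      if (i : ℕ) + r ≤ n + (j : ℕ) then
        -(PowerSeries.coeff (n + (j : ℕ) - (r + (i : ℕ)))
          (Einv n r * Dser n r d))
      else 0 := by
  have hj : (j : ℕ) < r := j.isLt
  have hi : (i : ℕ) < n := i.isLt
  -- derivative of Bser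
  have hPdB : Pd n r (Sum.inr j) (Bser n r) = PowerSeries.X ^ (r - (j : ℕ)) := by
    ext k
    rw [coeff_Pd, PowerSeries.coeff_X_pow]
    simp only [Bser, coeff_ser]
    by_cases h0 : k = 0
    · rw [if_pos h0, if_neg (by omega)]
      simp
    · rw [if_neg h0]
      by_cases h1 : k ≤ r
      · rw [if_pos h1, dif_pos ⟨by omega, h1⟩, pderiv_X]
        by_cases h2 : k = r - (j : ℕ)
        · rw [if_pos h2]
          have : (Sum.inr (⟨r - k, by omega⟩ : Fin r) : Fin n ⊕ Fin r) = Sum.inr j :=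
            congrArg Sum.inr (Fin.ext (show r - k = (j : ℕ) by omega))
          rw [this, Pi.single_eq_same]
        · rw [if_neg h2]
          have : (Sum.inr (⟨r - k, by omega⟩ : Fin r) : Fin n ⊕ Fin r) ≠ Sum.inr j := by
            intro hc
            apply h2
            have h3 : r - k = (j : ℕ) := congrArg Fin.val (Sum.inr_injective hc)
            omega
          rw [Pi.single_eq_of_ne this]
      · rw [if_neg h1, if_neg (by omega), map_zero]
  -- derivative of Aser
  have hPdA : Pd n r (Sum.inr j) (Aser n r) = 0 := by
    ext k
    rw [coeff_Pd, map_zero]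
    simp only [Aser, coeff_ser]
    by_cases h0 : k = 0
    · rw [if_pos h0]
      simp
    · rw [if_neg h0]
      by_cases h1 : k ≤ n
      · rw [if_pos h1, dif_pos ⟨by omega, h1⟩, pderiv_X, Pi.single_eq_of_ne (by simp)]
      · rw [if_neg h1, map_zero]
  set F := Pd n r (Sum.inr j) (Dser n r d) with hF
  set Ds := Dser n r d
  have step1 : ∀ k ≤ n, PowerSeries.coeff k
      (Bser n r * F + PowerSeries.X ^ (r - (j : ℕ)) * Ds) = 0 := by
    intro k hk
    have h4 : Pd n r (Sum.inr j) (Bser n r * Ds)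
        = PowerSeries.X ^ (r - (j : ℕ)) * Ds + Bser n r * F := by
      rw [Pd_mul, hPdB]
    have h5 : PowerSeries.coeff k (Pd n r (Sum.inr j) (Bser n r * Ds))
        = PowerSeries.coeff k (Pd n r (Sum.inr j) (Aser n r)) := by
      rw [coeff_Pd, coeff_Pd, hd k hk]
    rw [h4] at h5
    rw [hPdA, map_zero] at h5
    rw [map_add] at h5 ⊢
    rw [add_comm]
    exact h5
  set G := F + PowerSeries.X ^ (r - (j : ℕ)) * (Einv n r * Ds) with hG
  have hBG : ∀ k ≤ n, PowerSeries.coeff k (Bser n r * G) = 0 := by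
    intro k hk
    have h6 : Bser n r * G = Bser n r * F + PowerSeries.X ^ (r - (j : ℕ)) * Ds := by
      rw [hG, mul_add]
      congr 1
      rw [show Bser n r * (PowerSeries.X ^ (r - (j : ℕ)) * (Einv n r * Ds))
          = (Bser n r * Einv n r) * (PowerSeries.X ^ (r - (j : ℕ)) * Ds) by ring,
        BE_one, one_mul]
    rw [h6]
    exact step1 k hk
  have hFk : ∀ k ≤ n, PowerSeries.coeff k F
      = -(PowerSeries.coeff k (PowerSeries.X ^ (r - (j : ℕ)) * (Einv n r * Ds))) := by
    intro k hk
    have := elim_lemma n r n G hBG k hk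
    rw [hG, map_add] at this
    exact eq_neg_of_add_eq_zero_left this
  have hcF : PowerSeries.coeff (n - (i : ℕ)) F = pderiv (Sum.inr j) (d i) := by
    rw [coeff_Pd]
    simp only [Dser, coeff_ser]
    rw [if_neg (by omega), if_pos (by omega), dif_pos ⟨by omega, by omega⟩,
      show (⟨n - (n - (i : ℕ)), by omega⟩ : Fin n) = i from
        Fin.ext (show n - (n - (i : ℕ)) = (i : ℕ) by omega)]
  rw [← hcF, hFk (n - (i : ℕ)) (by omega), PowerSeries.coeff_X_pow_mul']
  by_cases hc : (i : ℕ) + r ≤ n + (j : ℕ)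
  · rw [if_pos (by omega), if_pos hc,
      show n - (i : ℕ) - (r - (j : ℕ)) = n + (j : ℕ) - (r + (i : ℕ)) by omega]
  · rw [if_neg (by omega), if_neg hc, neg_zero]

/-- Coefficients of `Dser` and `Dhatser` agree below order `n`. -/
lemma coeff_Dser_eq (n r : ℕ) (d : Fin n → R n r) (k : ℕ) (hk : k < n) :
    PowerSeries.coeff k (Dser n r d) = PowerSeries.coeff k (Dhatser n r d) := by
  simp only [Dser, Dhatser, coeff_ser]
  by_cases h0 : k = 0
  · rw [if_pos h0, if_pos h0]
  · rw [if_neg h0, if_neg h0, if_pos (by omega), if_pos (by omega),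
      dif_pos ⟨by omega, by omega⟩, dif_pos (⟨by omega, by omega⟩ : 1 ≤ k ∧ k ≤ n - 1)]

lemma ED_eq_EDhat (n r : ℕ) (d : Fin n → R n r) (m : ℕ) (hm : m < n) :
    PowerSeries.coeff m (Einv n r * Dser n r d)
      = PowerSeries.coeff m (Einv n r * Dhatser n r d) := by
  rw [PowerSeries.coeff_mul, PowerSeries.coeff_mul]
  apply Finset.sum_congr rfl
  intro p hp
  rw [Finset.HasAntidiagonal.mem_antidiagonal] at hp
  rw [coeff_Dser_eq n r d p.2 (by omega)]

end Aux

/-- Lemma 3.3: (i) `Q = `first `r` columns of `-B⁻¹·D̂`; in particular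
`∂d_i/∂b_j` depends only on `i - j`; (ii) if `q_1 ≥ 2` then each `∂d_i/∂b_j` (`i,j < r`) lies
in the ideal generated by the `∂d_{r-1}/∂b_j` and `d_1,…,d_{r-1}`. -/
theorem stmt4 (n r q1 r1 : ℕ) (hq1 : 1 ≤ q1) (h1 : 0 < r1) (h2 : r1 < r)
    (hn : n = q1 * r + r1)
    (d : Fin n → R n r) (hd : dSpec n r d) :
    ((Matrix.of fun (i : Fin n) (j : Fin r) =>
        pderiv (Sum.inr (⟨r - 1 - (j : ℕ), by omega⟩ : Fin r)) (d ⟨n - 1 - (i : ℕ), by omega⟩))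
      = (-((Bmat n r (by omega))⁻¹ * Dhat n r (by omega) d)).submatrix id
          (Fin.castLE (rle q1 r r1 n (by omega) hn)))
    ∧ (∀ (i i' : Fin n) (j j' : Fin r), (i : ℤ) - (j : ℤ) = (i' : ℤ) - (j' : ℤ) →
        pderiv (Sum.inr j) (d i) = pderiv (Sum.inr j') (d i'))
    ∧ (2 ≤ q1 → ∀ i j : Fin r,
        pderiv (Sum.inr j) (d (Fin.castLE (rle q1 r r1 n (by omega) hn) i)) ∈
          Ideal.span ((Set.range fun j' : Fin r =>
              pderiv (Sum.inr j') (d ⟨r - 1, by have := rle q1 r r1 n (by omega) hn; omega⟩))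
            ∪ d '' {k : Fin n | 1 ≤ (k : ℕ) ∧ (k : ℕ) ≤ r - 1})) := by
  have hr : 0 < r := by omega
  have hn0 : 0 < n := by
    have := Nat.le_mul_of_pos_left r hq1
    omega
  have hrn : r ≤ n := rle q1 r r1 n hq1 hn
  have hBinv : (Bmat n r hr)⁻¹ = toep n r (Einv n r) := by
    apply Matrix.inv_eq_right_inv
    rw [Bmat_eq_toep n r hr hn0, toep_mul, BE_one, toep_one]
  refine ⟨?_, ?_, ?_⟩
  · refine Matrix.ext fun i j => ?_
    have hi : (i : ℕ) < n := i.isLt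
    have hj : (j : ℕ) < r := j.isLt
    simp only [Matrix.of_apply, Matrix.submatrix_apply, id_eq, Matrix.neg_apply]
    rw [hBinv, Dhat_eq_toep n r hn0 d, toep_mul,
      key n r d hd ⟨n - 1 - (i : ℕ), by omega⟩ ⟨r - 1 - (j : ℕ), by omega⟩]
    simp only [toep, Matrix.of_apply, Fin.coe_castLE]
    by_cases hij : (j : ℕ) ≤ (i : ℕ)
    · rw [if_pos (show n - 1 - (i : ℕ) + r ≤ n + (r - 1 - (j : ℕ)) by omega),
        if_pos (show (j : ℕ) ≤ (i : ℕ) from hij),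
        show n + (r - 1 - (j : ℕ)) - (r + (n - 1 - (i : ℕ))) = (i : ℕ) - (j : ℕ) by omega,
        ED_eq_EDhat n r d ((i : ℕ) - (j : ℕ)) (by omega)]
    · rw [if_neg (show ¬(n - 1 - (i : ℕ) + r ≤ n + (r - 1 - (j : ℕ))) by omega),
        if_neg (show ¬((j : ℕ) ≤ (i : ℕ)) from hij), neg_zero]
  · intro i i' j j' hij
    have hi : (i : ℕ) < n := i.isLt
    have hi' : (i' : ℕ) < n := i'.isLt
    have hj : (j : ℕ) < r := j.isLt
    have hj' : (j' : ℕ) < r := j'.isLt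
    have hij' : (i : ℕ) + (j' : ℕ) = (i' : ℕ) + (j : ℕ) := by omega
    rw [key n r d hd i j, key n r d hd i' j']
    by_cases h1 : (i : ℕ) + r ≤ n + (j : ℕ)
    · rw [if_pos h1, if_pos (show (i' : ℕ) + r ≤ n + (j' : ℕ) by omega),
        show n + (j : ℕ) - (r + (i : ℕ)) = n + (j' : ℕ) - (r + (i' : ℕ)) by omega]
    · rw [if_neg h1, if_neg (show ¬((i' : ℕ) + r ≤ n + (j' : ℕ)) by omega)]
  · intro hq2 i j
    have h2r : 2 * r + 1 ≤ n := by
      have : 2 * r ≤ q1 * r := Nat.mul_le_mul_right r hq2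
      omega
    have hi : (i : ℕ) < r := i.isLt
    have hj : (j : ℕ) < r := j.isLt
    -- the generators of the ideal coming from partial derivatives
    have hgen : ∀ m, n - 2 * r + 1 ≤ m → m ≤ n - r →
        PowerSeries.coeff m (Einv n r * Dser n r d) ∈
          Ideal.span ((Set.range fun j' : Fin r =>
              pderiv (Sum.inr j') (d ⟨r - 1, by omega⟩))
            ∪ d '' {k : Fin n | 1 ≤ (k : ℕ) ∧ (k : ℕ) ≤ r - 1}) := by
      intro m hm1 hm2
      have e1 := key n r d hd ⟨r - 1, by omega⟩ (⟨m - (n - 2 * r + 1), by omega⟩ : Fin r)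
      rw [if_pos (show r - 1 + r ≤ n + (m - (n - 2 * r + 1)) by omega),
        show n + (m - (n - 2 * r + 1)) - (r + (r - 1)) = m by omega] at e1
      have e2 : pderiv (Sum.inr (⟨m - (n - 2 * r + 1), by omega⟩ : Fin r))
          (d ⟨r - 1, by omega⟩) ∈
          Ideal.span ((Set.range fun j' : Fin r =>
              pderiv (Sum.inr j') (d ⟨r - 1, by omega⟩))
            ∪ d '' {k : Fin n | 1 ≤ (k : ℕ) ∧ (k : ℕ) ≤ r - 1}) :=
        Ideal.subset_span (Set.mem_union_left _
          (Set.mem_range_self (⟨m - (n - 2 * r + 1), by omega⟩ : Fin r)))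
      rw [e1] at e2
      exact neg_mem_iff.mp e2
    have main : ∀ m, m ≤ n - 1 → n - 2 * r + 1 ≤ m →
        PowerSeries.coeff m (Einv n r * Dser n r d) ∈
          Ideal.span ((Set.range fun j' : Fin r =>
              pderiv (Sum.inr j') (d ⟨r - 1, by omega⟩))
            ∪ d '' {k : Fin n | 1 ≤ (k : ℕ) ∧ (k : ℕ) ≤ r - 1}) := by
      intro m
      induction m using Nat.strong_induction_on with
      | _ m IH =>
        intro hm1 hm2
        by_cases hc : m ≤ n - r
        · exact hgen m hm2 hc
        · have hBsplit : PowerSeries.coeff m (Dser n r d)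
              = ∑ p ∈ Finset.HasAntidiagonal.antidiagonal m,
                  PowerSeries.coeff p.1 (Bser n r) *
                    PowerSeries.coeff p.2 (Einv n r * Dser n r d) := by
            rw [← PowerSeries.coeff_mul, ← mul_assoc, BE_one, one_mul]
          rw [← Finset.add_sum_erase _ _ (show ((0 : ℕ), m) ∈ Finset.HasAntidiagonal.antidiagonal m by
            simp)] at hBsplit
          have hB0 : PowerSeries.coeff ((0 : ℕ), m).1 (Bser n r) = 1 := by
            simp [Bser, coeff_ser]
          rw [hB0, one_mul] at hBsplit
          have hhm : PowerSeries.coeff m (Einv n r * Dser n r d)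
              = PowerSeries.coeff m (Dser n r d)
                - ∑ p ∈ (Finset.HasAntidiagonal.antidiagonal m).erase ((0 : ℕ), m),
                    PowerSeries.coeff p.1 (Bser n r) *
                      PowerSeries.coeff p.2 (Einv n r * Dser n r d) :=
            eq_sub_of_add_eq hBsplit.symm
          rw [hhm]
          apply sub_mem
          · have hDm : PowerSeries.coeff m (Dser n r d) = d ⟨n - m, by omega⟩ := by
              simp only [Dser, coeff_ser]
              rw [if_neg (by omega), if_pos (by omega), dif_pos ⟨by omega, by omega⟩]
            rw [hDm]
            exact Ideal.subset_span (Set.mem_union_right _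
              ⟨⟨n - m, by omega⟩, ⟨show 1 ≤ n - m by omega, show n - m ≤ r - 1 by omega⟩, rfl⟩)
          · apply Ideal.sum_mem
            intro p hp
            rw [Finset.mem_erase, Finset.HasAntidiagonal.mem_antidiagonal] at hp
            obtain ⟨hp0, hpsum⟩ := hp
            have hp1 : 1 ≤ p.1 := by
              rcases Nat.eq_zero_or_pos p.1 with h | h
              · exfalso
                apply hp0
                have h2 : p.2 = m := by omega
                rw [← h, ← h2]
              · exact h
            by_cases hpr : p.1 ≤ r
            · exact Ideal.mul_mem_left _ _ (IH p.2 (by omega) (by omega) (by omega))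
            · have hB0' : PowerSeries.coeff p.1 (Bser n r) = 0 := by
                simp only [Bser, coeff_ser]
                rw [if_neg (by omega), if_neg (by omega)]
              rw [hB0', zero_mul]
              exact zero_mem _
    rw [key n r d hd (Fin.castLE hrn i) j]
    simp only [Fin.coe_castLE]
    rw [if_pos (show (i : ℕ) + r ≤ n + (j : ℕ) by omega)]
    apply neg_mem
    exact main (n + (j : ℕ) - (r + (i : ℕ))) (by omega) (by omega)

end TB
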